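/- Let H be a Hopf algebra over a field k and χ ∈ H⊗H a counital 2-cocycle. Then the following identity holds in H⊗H: χ⁽¹⁾·S((χ⁽²⁾)₁) ⊗ (χ⁽²⁾)₂ = χ⁽¹⁾·S(χ⁽²⁾)·S(χ⁻⁽¹⁾) ⊗ χ⁻⁽²⁾, where on the left the coproduct is applied to the second leg of χ, and on the right the two factors χ and χ⁻¹ carry independent implicit summations. -/

import Mathlib

open scoped TensorProduct
open TensorProduct LinearMap

namespace PaperTwist

variable (k H : Type) [Field k] [Ring H] [HopfAlgebra k H]

/-- The comultiplication of `H`. -/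
noncomputable def Δ : H →ₗ[k] H ⊗[k] H := Coalgebra.comul

/-- The counit of `H`. -/
noncomputable def ε : H →ₗ[k] k := Coalgebra.counit

/-- The antipode of `H`. -/
noncomputable def S : H →ₗ[k] H := HopfAlgebra.antipode k

/-- `χ`, with (two-sided) inverse `χ'` in the algebra `H ⊗ H`, is a counital 2-cocycle:
`χ₂₃ · ((id ⊗ Δ) χ) = χ₁₂ · ((Δ ⊗ id) χ)` and `(ε ⊗ id) χ = 1 = (id ⊗ ε) χ`. -/
def IsCocycle (χ χ' : H ⊗[k] H) : Prop :=
  χ * χ' = 1 ∧ χ' * χ = 1 ∧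
    (1 ⊗ₜ[k] χ) * (LinearMap.lTensor H (Δ k H) χ) =
      (TensorProduct.assoc k H H H) ((χ ⊗ₜ[k] 1) * (LinearMap.rTensor H (Δ k H) χ)) ∧
    (TensorProduct.lid k H) ((LinearMap.rTensor H (ε k H)) χ) = 1 ∧
    (TensorProduct.rid k H) ((LinearMap.lTensor H (ε k H)) χ) = 1

variable (V : Type) [AddCommGroup V] [Module k V]

/-- A (left-left) crossed module (Drinfeld–Radford–Yetter module) over `H`:
a left action `ρ` and a counital coassociative left coaction `β` satisfying
`h₁·v₍₁₎ ⊗ h₂ ▷ v₍∞₎ = (h₁ ▷ v)₍₁₎·h₂ ⊗ (h₁ ▷ v)₍∞₎`, the latter expressed via arbitrary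
finite representations of `Δ h`. -/
structure IsCrossedModule (ρ : H →ₗ[k] V →ₗ[k] V) (β : V →ₗ[k] H ⊗[k] V) : Prop where
  act_one : ∀ v : V, ρ 1 v = v
  act_mul : ∀ (g h : H) (v : V), ρ (g * h) v = ρ g (ρ h v)
  coact_counit : ∀ v : V, (TensorProduct.lid k V) ((LinearMap.rTensor V (ε k H)) (β v)) = v
  coact_coassoc : ∀ v : V,
    (LinearMap.rTensor V (Δ k H)) (β v)
      = (TensorProduct.assoc k H H V).symm ((LinearMap.lTensor H β) (β v))
  compat : ∀ (h : H) (v : V) (ι : Type) (s : Finset ι) (h1 h2 : ι → H),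
    Δ k H h = ∑ i ∈ s, h1 i ⊗ₜ[k] h2 i →
    ∑ i ∈ s, (TensorProduct.map (LinearMap.mulLeft k (h1 i)) (ρ (h2 i))) (β v)
      = ∑ i ∈ s, (LinearMap.rTensor V (LinearMap.mulRight k (h2 i))) (β (ρ (h1 i) v))

/-- The twisted coaction `β_χ(v) = χ⁽¹⁾·(χ⁻⁽¹⁾ ▷ v)₍₁₎·χ⁻⁽²⁾ ⊗ χ⁽²⁾ ▷ (χ⁻⁽¹⁾ ▷ v)₍∞₎`,
expressed through finite representations `χ = ∑ x1 i ⊗ x2 i`, `χ⁻¹ = ∑ y1 j ⊗ y2 j`. -/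
noncomputable def twistedCoaction (ρ : H →ₗ[k] V →ₗ[k] V) (β : V →ₗ[k] H ⊗[k] V)
    {ι₁ ι₂ : Type} (s₁ : Finset ι₁) (x1 x2 : ι₁ → H) (s₂ : Finset ι₂) (y1 y2 : ι₂ → H) :
    V →ₗ[k] H ⊗[k] V :=
  ∑ i ∈ s₁, ∑ j ∈ s₂,
    (TensorProduct.map ((LinearMap.mulLeft k (x1 i)) ∘ₗ (LinearMap.mulRight k (y2 j)))
        (ρ (x2 i))) ∘ₗ β ∘ₗ (ρ (y1 j))

/-- The twisted coproduct `Δ_χ(h) = χ · Δ(h) · χ⁻¹`. -/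
noncomputable def twistedComul (χ χ' : H ⊗[k] H) : H →ₗ[k] H ⊗[k] H :=
  (LinearMap.mulLeft k χ) ∘ₗ (LinearMap.mulRight k χ') ∘ₗ (Δ k H)

end PaperTwist

open PaperTwist

namespace AuxAll
open Coalgebra
namespace Aux

variable {k H : Type} [Field k] [Ring H] [HopfAlgebra k H]

/-- Convolution product on linear maps `H ⊗ H → H`. -/
noncomputable def conv (f g : H ⊗[k] H →ₗ[k] H) : H ⊗[k] H →ₗ[k] H :=
  LinearMap.mul' k H ∘ₗ TensorProduct.map f g ∘ₗ Coalgebra.comul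

/-- The convolution unit. -/
noncomputable def cunit : H ⊗[k] H →ₗ[k] H :=
  Algebra.linearMap k H ∘ₗ Coalgebra.counit

lemma conv_apply_repr {ι : Type*} (f g : H ⊗[k] H →ₗ[k] H) (x : H ⊗[k] H) (r : Coalgebra.Repr k x ι) :
    conv f g x = ∑ i ∈ r.index, f (r.left i) * g (r.right i) := by
  simp only [conv, LinearMap.comp_apply, ← r.eq, map_sum, TensorProduct.map_tmul,
    LinearMap.mul'_apply]

lemma conv_cunit_right (f : H ⊗[k] H →ₗ[k] H) : conv f cunit = f := by
  refine LinearMap.ext fun x => ?_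
  rw [conv_apply_repr f cunit x (ℛ k x)]
  have h := Coalgebra.sum_map_tmul_counit_eq (R := k) f x (repr := ℛ k x)
  have h2 := congrArg (TensorProduct.rid k H) h
  simp only [map_sum, TensorProduct.rid_tmul, one_smul] at h2
  rw [← h2]
  refine Finset.sum_congr rfl fun i _ => ?_
  simp [cunit, Algebra.smul_def, ← Algebra.commutes]

lemma conv_cunit_left (f : H ⊗[k] H →ₗ[k] H) : conv cunit f = f := by
  refine LinearMap.ext fun x => ?_
  rw [conv_apply_repr cunit f x (ℛ k x)]
  have h := Coalgebra.sum_counit_tmul_map_eq (R := k) f x (repr := ℛ k x)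
  have h2 := congrArg (TensorProduct.lid k H) h
  simp only [map_sum, TensorProduct.lid_tmul, one_smul] at h2
  rw [← h2]
  refine Finset.sum_congr rfl fun i _ => ?_
  simp [cunit, Algebra.smul_def]

lemma conv_assoc (f g h : H ⊗[k] H →ₗ[k] H) :
    conv (conv f g) h = conv f (conv g h) := by
  refine LinearMap.ext fun x => ?_
  set r := ℛ k x
  set a₁ : (i : r.ι) → Coalgebra.Repr k (r.left i) _ := fun i => ℛ k (r.left i)
  set a₂ : (i : r.ι) → Coalgebra.Repr k (r.right i) _ := fun i => ℛ k (r.right i)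
  have key := Coalgebra.sum_map_tmul_tmul_eq (R := k) f g h x (repr := r) (a₁ := a₁) (a₂ := a₂)
  have key2 := congrArg (LinearMap.mul' k H ∘ₗ LinearMap.lTensor H (LinearMap.mul' k H)) key
  simp only [map_sum, LinearMap.comp_apply, LinearMap.lTensor_tmul, LinearMap.mul'_apply] at key2
  rw [conv_apply_repr (conv f g) h x r, conv_apply_repr f (conv g h) x r]
  calc ∑ i ∈ r.index, conv f g (r.left i) * h (r.right i)
      = ∑ i ∈ r.index, ∑ j ∈ (a₁ i).index,
          f ((a₁ i).left j) * (g ((a₁ i).right j) * h (r.right i)) := by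
        refine Finset.sum_congr rfl fun i _ => ?_
        rw [conv_apply_repr f g _ (a₁ i), Finset.sum_mul]
        simp [mul_assoc]
    _ = ∑ i ∈ r.index, ∑ j ∈ (a₂ i).index,
          f (r.left i) * (g ((a₂ i).left j) * h ((a₂ i).right j)) := key2.symm
    _ = ∑ i ∈ r.index, f (r.left i) * conv g h (r.right i) := by
        refine Finset.sum_congr rfl fun i _ => ?_
        rw [conv_apply_repr g h _ (a₂ i), Finset.mul_sum]

end Aux

namespace Aux2
open Aux
variable {k H : Type} [Field k] [Ring H] [HopfAlgebra k H]

/-- A representation of `comul (a ⊗ₜ b)` built from representations of `a` and `b`. -/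
noncomputable def tmulRepr {ιa ιb : Type*} (a b : H) (ra : Coalgebra.Repr k a ιa) (rb : Coalgebra.Repr k b ιb) :
    Coalgebra.Repr k (a ⊗ₜ[k] b) (ιa × ιb) where
  index := ra.index ×ˢ rb.index
  left p := ra.left p.1 ⊗ₜ[k] rb.left p.2
  right p := ra.right p.1 ⊗ₜ[k] rb.right p.2
  eq := by
    have : CoalgebraStruct.comul (R := k) (a ⊗ₜ[k] b)
        = TensorProduct.tensorTensorTensorComm k H H H H
            (CoalgebraStruct.comul (R := k) a ⊗ₜ[k] CoalgebraStruct.comul (R := k) b) := rfl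
    rw [this, ← ra.eq, ← rb.eq, Finset.sum_product]
    simp only [TensorProduct.sum_tmul, TensorProduct.tmul_sum, map_sum,
      TensorProduct.tensorTensorTensorComm_tmul]
    rw [Finset.sum_comm]

/-- A representation of `comul (a * b)` built from representations of `a` and `b`. -/
noncomputable def mulRepr {ιa ιb : Type*} (a b : H) (ra : Coalgebra.Repr k a ιa) (rb : Coalgebra.Repr k b ιb) :
    Coalgebra.Repr k (a * b) (ιa × ιb) where
  index := ra.index ×ˢ rb.index
  left p := ra.left p.1 * rb.left p.2
  right p := ra.right p.1 * rb.right p.2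
  eq := by
    have : CoalgebraStruct.comul (R := k) (a * b)
        = CoalgebraStruct.comul (R := k) a * CoalgebraStruct.comul (R := k) b :=
      map_mul (Bialgebra.comulAlgHom k H) a b
    rw [this, ← ra.eq, ← rb.eq, Finset.sum_product, Finset.sum_mul_sum]
    simp [Algebra.TensorProduct.tmul_mul_tmul]

lemma conv_SF : conv (HopfAlgebra.antipode (R := k) ∘ₗ LinearMap.mul' k H)
    (LinearMap.mul' k H) = (cunit : H ⊗[k] H →ₗ[k] H) := by
  ext a b
  simp only [AlgebraTensorModule.curry_apply, curry_apply, LinearMap.coe_restrictScalars]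
  rw [conv_apply_repr _ _ (a ⊗ₜ[k] b) (tmulRepr a b (ℛ k a) (ℛ k b))]
  have key := HopfAlgebra.sum_antipode_mul_eq_smul (R := k) (mulRepr a b (ℛ k a) (ℛ k b))
  simp only [mulRepr, Finset.sum_product] at key
  simp only [tmulRepr, Finset.sum_product, LinearMap.comp_apply, LinearMap.mul'_apply]
  rw [key]
  have : Coalgebra.counit (R := k) (a * b)
      = Coalgebra.counit (R := k) a * Coalgebra.counit (R := k) b :=
    map_mul (Bialgebra.counitAlgHom k H) a b
  simp [cunit, this, Algebra.smul_def, TensorProduct.counit_def]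
  rw [← RingHom.map_mul, ← RingHom.map_mul, mul_comm]

lemma conv_mG : conv (LinearMap.mul' k H)
    (LinearMap.mul' k H ∘ₗ TensorProduct.map (HopfAlgebra.antipode (R := k))
      (HopfAlgebra.antipode (R := k)) ∘ₗ (TensorProduct.comm k H H).toLinearMap)
    = (cunit : H ⊗[k] H →ₗ[k] H) := by
  ext a b
  simp only [AlgebraTensorModule.curry_apply, curry_apply, LinearMap.coe_restrictScalars]
  rw [conv_apply_repr _ _ (a ⊗ₜ[k] b) (tmulRepr a b (ℛ k a) (ℛ k b))]
  simp only [tmulRepr, Finset.sum_product, LinearMap.comp_apply, LinearMap.mul'_apply,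
    LinearEquiv.coe_coe, TensorProduct.comm_tmul, TensorProduct.map_tmul]
  have inner : ∀ i ∈ (ℛ k a).index,
      ∑ j ∈ (ℛ k b).index,
        (ℛ k a).left i * (ℛ k b).left j *
          (HopfAlgebra.antipode (R := k) ((ℛ k b).right j) *
            HopfAlgebra.antipode (R := k) ((ℛ k a).right i))
      = Coalgebra.counit (R := k) b •
          ((ℛ k a).left i * HopfAlgebra.antipode (R := k) ((ℛ k a).right i)) := by
    intro i _
    have hb := HopfAlgebra.sum_mul_antipode_eq_smul (R := k) (ℛ k b)
    calc ∑ j ∈ (ℛ k b).index,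
          (ℛ k a).left i * (ℛ k b).left j *
            (HopfAlgebra.antipode (R := k) ((ℛ k b).right j) *
              HopfAlgebra.antipode (R := k) ((ℛ k a).right i))
        = (ℛ k a).left i * (∑ j ∈ (ℛ k b).index,
            (ℛ k b).left j * HopfAlgebra.antipode (R := k) ((ℛ k b).right j)) *
              HopfAlgebra.antipode (R := k) ((ℛ k a).right i) := by
          rw [Finset.mul_sum, Finset.sum_mul]
          exact Finset.sum_congr rfl fun j _ => by rw [mul_assoc, mul_assoc, mul_assoc]
      _ = _ := by rw [hb]; simp [Algebra.smul_def, ← Algebra.commutes, mul_assoc]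
  rw [Finset.sum_congr rfl inner]
  have ha := HopfAlgebra.sum_mul_antipode_eq_smul (R := k) (ℛ k a)
  rw [← Finset.smul_sum, ha]
  simp [cunit, TensorProduct.counit_def, Algebra.smul_def,
    map_mul (Bialgebra.counitAlgHom k H) a b]

theorem antipode_mul (a b : H) :
    HopfAlgebra.antipode (R := k) (a * b)
      = HopfAlgebra.antipode (R := k) b * HopfAlgebra.antipode (R := k) a := by
  have hFG : (HopfAlgebra.antipode (R := k) ∘ₗ LinearMap.mul' k H : H ⊗[k] H →ₗ[k] H)
      = LinearMap.mul' k H ∘ₗ TensorProduct.map (HopfAlgebra.antipode (R := k))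
          (HopfAlgebra.antipode (R := k)) ∘ₗ (TensorProduct.comm k H H).toLinearMap := by
    calc (HopfAlgebra.antipode (R := k) ∘ₗ LinearMap.mul' k H : H ⊗[k] H →ₗ[k] H)
        = conv (HopfAlgebra.antipode (R := k) ∘ₗ LinearMap.mul' k H) cunit :=
          (conv_cunit_right _).symm
      _ = conv (HopfAlgebra.antipode (R := k) ∘ₗ LinearMap.mul' k H)
            (conv (LinearMap.mul' k H) _) := by rw [conv_mG]
      _ = conv (conv (HopfAlgebra.antipode (R := k) ∘ₗ LinearMap.mul' k H)
            (LinearMap.mul' k H)) _ := (conv_assoc _ _ _).symm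
      _ = conv cunit _ := by rw [conv_SF]
      _ = _ := conv_cunit_left _
  have := congrArg (fun f : H ⊗[k] H →ₗ[k] H => f (a ⊗ₜ[k] b)) hFG
  simpa using this

end Aux2

namespace AuxMain
variable {k H : Type} [Field k] [Ring H] [HopfAlgebra k H]

lemma antipode_mul' (a b : H) : HopfAlgebra.antipode (R := k) (a * b)
    = HopfAlgebra.antipode (R := k) b * HopfAlgebra.antipode (R := k) a :=
  Aux2.antipode_mul a b

local notation "m" => LinearMap.mul' k H
local notation "𝒜" => (HopfAlgebra.antipode (R := k) (A := H))
local notation "δ" => (Coalgebra.comul (R := k) (A := H))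
local notation "εε" => (Coalgebra.counit (R := k) (A := H))

lemma assoc_mul (X Y : (H ⊗[k] H) ⊗[k] H) :
    TensorProduct.assoc k H H H (X * Y)
      = TensorProduct.assoc k H H H X * TensorProduct.assoc k H H H Y := by
  have h : (TensorProduct.assoc k H H H : (H ⊗[k] H) ⊗[k] H → H ⊗[k] (H ⊗[k] H))
      = (Algebra.TensorProduct.assoc k k k H H H : (H ⊗[k] H) ⊗[k] H → H ⊗[k] (H ⊗[k] H)) := rfl
  rw [show (TensorProduct.assoc k H H H) (X * Y)
      = Algebra.TensorProduct.assoc k k k H H H (X * Y) from congrFun h _, map_mul]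
  rfl

lemma assoc_symm_mul (X Y : H ⊗[k] (H ⊗[k] H)) :
    (TensorProduct.assoc k H H H).symm (X * Y)
      = (TensorProduct.assoc k H H H).symm X * (TensorProduct.assoc k H H H).symm Y := by
  apply (TensorProduct.assoc k H H H).injective
  rw [LinearEquiv.apply_symm_apply, assoc_mul, LinearEquiv.apply_symm_apply,
    LinearEquiv.apply_symm_apply]

lemma B1 (a : H) (t : H ⊗[k] H) :
    m (LinearMap.lTensor H 𝒜 (((1 : H) ⊗ₜ[k] a) * t))
      = m (LinearMap.lTensor H 𝒜 t) * 𝒜 a := by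
  induction t with
  | zero => simp
  | tmul u v =>
      simp only [Algebra.TensorProduct.tmul_mul_tmul, one_mul, LinearMap.lTensor_tmul,
        LinearMap.mul'_apply, antipode_mul' (k := k) a v, mul_assoc]
  | add s t hs ht => simp only [mul_add, map_add, add_mul, hs, ht]

lemma B2' (u v : H) (z : H ⊗[k] H) :
    m (TensorProduct.map (LinearMap.mulLeft k u) (LinearMap.mulRight k v) z)
      = u * m z * v := by
  induction z with
  | zero => simp
  | tmul p q => simp [mul_assoc]
  | add s t hs ht => simp only [map_add, hs, ht, mul_add, add_mul]

lemma B2aux (u v : H) (z : H ⊗[k] H) :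
    LinearMap.lTensor H 𝒜 ((u ⊗ₜ[k] v) * z)
      = TensorProduct.map (LinearMap.mulLeft k u) (LinearMap.mulRight k (𝒜 v))
          (LinearMap.lTensor H 𝒜 z) := by
  induction z with
  | zero => simp
  | tmul p q =>
      simp [Algebra.TensorProduct.tmul_mul_tmul, antipode_mul' (k := k) v q]
  | add s t hs ht => simp only [mul_add, map_add, hs, ht]

lemma B2 (x : H) (t : H ⊗[k] H) :
    m (LinearMap.lTensor H 𝒜 (t * δ x)) = εε x • m (LinearMap.lTensor H 𝒜 t) := by
  induction t with
  | zero => simp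
  | tmul u v =>
      rw [B2aux, B2', HopfAlgebra.mul_antipode_lTensor_comul_apply]
      simp only [LinearMap.lTensor_tmul, LinearMap.mul'_apply, Algebra.smul_def]
      have hco : u * algebraMap k H (εε x) = algebraMap k H (εε x) * u :=
        (Algebra.commutes _ _).symm
      simp only [← mul_assoc]
      rw [hco]
  | add s t hs ht => simp only [add_mul, map_add, hs, ht, smul_add]

lemma lemA (χ : H ⊗[k] H) (w c : H ⊗[k] H) :
    (LinearMap.rTensor H (m ∘ₗ LinearMap.lTensor H 𝒜))
        ((TensorProduct.assoc k H H H).symm ((1 : H) ⊗ₜ[k] w)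
          * ((χ ⊗ₜ[k] (1 : H)) * LinearMap.rTensor H δ c))
      = (LinearMap.rTensor H ((LinearMap.mulLeft k (m (LinearMap.lTensor H 𝒜 χ))) ∘ₗ 𝒜)) w
          * ((1 : H) ⊗ₜ[k] (TensorProduct.lid k H) (LinearMap.rTensor H εε c)) := by
  induction w with
  | zero => simp only [tmul_zero, LinearEquiv.map_zero, LinearMap.map_zero, zero_mul]
  | add w w' hw hw' => simp only [tmul_add, map_add, add_mul, hw, hw']
  | tmul a b =>
    induction c with
    | zero => simp
    | add c c' hc hc' => simp only [map_add, tmul_add, mul_add, hc, hc']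
    | tmul x y =>
      simp only [TensorProduct.assoc_symm_tmul, LinearMap.rTensor_tmul,
        Algebra.TensorProduct.tmul_mul_tmul, one_mul, mul_one,
        TensorProduct.lid_tmul, LinearMap.comp_apply]
      rw [B1, B2]
      simp only [LinearMap.mulLeft_apply, smul_mul_assoc, ← smul_tmul', tmul_smul,
        mul_smul_comm]
end AuxMain

end AuxAll


/-- For a counital 2-cocycle `χ ∈ H ⊗ H` (with inverse `χ'`),
`χ⁽¹⁾·S((χ⁽²⁾)₁) ⊗ (χ⁽²⁾)₂ = χ⁽¹⁾·S(χ⁽²⁾)·S(χ⁻⁽¹⁾) ⊗ χ⁻⁽²⁾` in `H ⊗ H`.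
The left-hand side applies `id ⊗ Δ` to `χ` and then multiplies `x·S y ⊗ z`; the right-hand
side multiplies `U = χ⁽¹⁾·S(χ⁽²⁾)` by `S` of the first leg of `χ⁻¹`. -/
theorem statement_13
    {k H : Type} [Field k] [Ring H] [HopfAlgebra k H]
    (hS : Function.Bijective (S k H))
    (χ χ' : H ⊗[k] H) (hχ : IsCocycle k H χ χ') :
    (LinearMap.rTensor H ((LinearMap.mul' k H) ∘ₗ (LinearMap.lTensor H (S k H))))
        ((TensorProduct.assoc k H H H).symm ((LinearMap.lTensor H (Δ k H)) χ))
      = (LinearMap.rTensor H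
          ((LinearMap.mulLeft k ((LinearMap.mul' k H) ((LinearMap.lTensor H (S k H)) χ)))
            ∘ₗ (S k H))) χ' := by
  obtain ⟨hinv, hinv', hco, hcl, hcr⟩ := hχ
  have hΔ : Δ k H = (Coalgebra.comul : H →ₗ[k] H ⊗[k] H) := rfl
  have hSd : S k H = (HopfAlgebra.antipode k : H →ₗ[k] H) := rfl
  have hε : ε k H = (Coalgebra.counit : H →ₗ[k] k) := rfl
  rw [hΔ, hSd]
  rw [hΔ] at hco
  rw [hε] at hcl
  have step1 : LinearMap.lTensor H (Coalgebra.comul (R := k)) χ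
      = ((1 : H) ⊗ₜ[k] χ') * (TensorProduct.assoc k H H H
          ((χ ⊗ₜ[k] (1 : H)) * LinearMap.rTensor H (Coalgebra.comul (R := k)) χ)) := by
    calc LinearMap.lTensor H (Coalgebra.comul (R := k)) χ
        = 1 * LinearMap.lTensor H (Coalgebra.comul (R := k)) χ := (one_mul _).symm
      _ = (((1 : H) ⊗ₜ[k] χ') * ((1 : H) ⊗ₜ[k] χ))
            * LinearMap.lTensor H (Coalgebra.comul (R := k)) χ := by
          rw [Algebra.TensorProduct.tmul_mul_tmul, hinv', one_mul (1 : H),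
            ← Algebra.TensorProduct.one_def, one_mul]
      _ = ((1 : H) ⊗ₜ[k] χ') * (((1 : H) ⊗ₜ[k] χ)
            * LinearMap.lTensor H (Coalgebra.comul (R := k)) χ) := mul_assoc _ _ _
      _ = _ := by rw [hco]
  have step2 : (TensorProduct.assoc k H H H).symm
        (LinearMap.lTensor H (Coalgebra.comul (R := k)) χ)
      = (TensorProduct.assoc k H H H).symm ((1 : H) ⊗ₜ[k] χ')
          * ((χ ⊗ₜ[k] (1 : H)) * LinearMap.rTensor H (Coalgebra.comul (R := k)) χ) := by
    rw [step1, AuxAll.AuxMain.assoc_symm_mul, LinearEquiv.symm_apply_apply]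
  rw [step2, AuxAll.AuxMain.lemA χ χ' χ, hcl, ← Algebra.TensorProduct.one_def, mul_one]
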